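/- Axiom (M1) is valid in 𝓜(Tm): for all a, b ∈ V, x ∈ □̃₁(¬̃ a), u ∈ a →̃ b, y ∈ □̃₁ u, and w ∈ x →̃ y, we have w ∈ D = {T, t}. (This encodes validity of □¬φ → □(φ → ψ).) -/
import Mathlib

inductive MV | T | t | f | F
deriving DecidableEq

open MV

def D : Set MV := {T, t}

def mneg : MV → MV
  | T => F | t => f | f => t | F => T

def mimp : MV → MV → Set MV
  | T, b => {b}
  | t, T => {T} | t, t => {T, t} | t, f => {f} | t, F => {f}
  | f, T => {T} | f, t => {T, t} | f, f => {T, t} | f, F => {t}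
  | F, _ => {T}

def box1 : MV → Set MV
  | T => {T, t} | _ => {f, F}

def box2 : MV → Set MV
  | T => {T} | _ => {f, F}

def box3 : MV → Set MV
  | T => {T} | _ => {F}

theorem axM1_valid :
    ∀ a b x u y w : MV, x ∈ box1 (mneg a) → u ∈ mimp a b → y ∈ box1 u →
      w ∈ mimp x y → w ∈ D := by
  intro a b x u y w hx hu hy hw
  cases a <;> cases x <;> simp [mneg, box1] at hx <;>
    cases u <;> simp [mimp] at hu <;>
      cases y <;> simp [box1] at hy <;>
        cases w <;> simp [mimp] at hw <;> simp [D]
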